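/- Let L ≥ 1 and K ≥ L, let z₀, …, z_{L−1} be pairwise distinct complex numbers of modulus 1 with D = diag(z₀, …, z_{L−1}), let H₀ be an L×L Hermitian positive semidefinite matrix with all diagonal entries nonzero, let A be an N_r×L complex matrix of full column rank, and let W be an N_r×N_r unitary matrix. Then the matrix Wᴴ A ((1/K) Σ_{k=0}^{K−1} Dᵏ H₀ (Dᵏ)ᴴ) Aᴴ W has rank L. -/

import Mathlib

open Matrix Finset ComplexOrder

set_option maxHeartbeats 1000000 in

private lemma aux_posdef (L K : ℕ) (hL : 1 ≤ L) (hK : L ≤ K)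
    (z : Fin L → ℂ) (hz : Function.Injective z)
    (H₀ : Matrix (Fin L) (Fin L) ℂ) (hH₀ : H₀.PosSemidef) (hdiag : ∀ ℓ, H₀ ℓ ℓ ≠ 0) :
    (∑ k ∈ Finset.range K,
      (Matrix.diagonal z ^ k) * H₀ * ((Matrix.diagonal z ^ k)ᴴ)).PosDef := by
  set T := ∑ k ∈ Finset.range K,
      (Matrix.diagonal z ^ k) * H₀ * ((Matrix.diagonal z ^ k)ᴴ) with hT
  have hterm : ∀ k, ((Matrix.diagonal z ^ k) * H₀ * ((Matrix.diagonal z ^ k)ᴴ)).PosSemidef :=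
    fun k => hH₀.mul_mul_conjTranspose_same _
  have hTpsd : T.PosSemidef := by
    rw [hT]
    apply Finset.sum_induction _ _ (fun a b ha hb => ha.add hb) Matrix.PosSemidef.zero
    exact fun k _ => hterm k
  refine Matrix.PosDef.of_dotProduct_mulVec_pos hTpsd.isHermitian (fun x hx => ?_)
  rcases lt_or_eq_of_le (hTpsd.dotProduct_mulVec_nonneg x) with h | h
  · exact h
  exfalso
  -- each term's quadratic form is zero
  have hsum : ∑ k ∈ Finset.range K,
      star x ⬝ᵥ ((Matrix.diagonal z ^ k) * H₀ * ((Matrix.diagonal z ^ k)ᴴ)) *ᵥ x = 0 := by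
    have h' := h.symm
    rw [hT] at h'
    have hlin : ∀ (s : Finset ℕ) (f : ℕ → Matrix (Fin L) (Fin L) ℂ),
        star x ⬝ᵥ (∑ k ∈ s, f k) *ᵥ x = ∑ k ∈ s, star x ⬝ᵥ (f k) *ᵥ x := by
      intro s f
      induction s using Finset.cons_induction with
      | empty => simp
      | cons a s ha ih => rw [Finset.sum_cons, Finset.sum_cons, Matrix.add_mulVec, dotProduct_add, ih]
    rw [hlin] at h'
    exact h'
  have hzero : ∀ k ∈ Finset.range K,
      star x ⬝ᵥ ((Matrix.diagonal z ^ k) * H₀ * ((Matrix.diagonal z ^ k)ᴴ)) *ᵥ x = 0 := by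
    rw [← Finset.sum_eq_zero_iff_of_nonneg (fun k _ => (hterm k).dotProduct_mulVec_nonneg x)]
    exact hsum
  -- hence H₀ *ᵥ ((D^k)ᴴ *ᵥ x) = 0 for all k < K
  have hker : ∀ k < K, H₀ *ᵥ (((Matrix.diagonal z ^ k)ᴴ) *ᵥ x) = 0 := by
    intro k hk
    have h1 := hzero k (Finset.mem_range.mpr hk)
    have h2 : star (((Matrix.diagonal z ^ k)ᴴ) *ᵥ x) ⬝ᵥ H₀ *ᵥ (((Matrix.diagonal z ^ k)ᴴ) *ᵥ x)
        = 0 := by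
      rw [← h1]
      simp [star_mulVec, dotProduct_mulVec, vecMul_vecMul, Matrix.mul_assoc]
    exact (hH₀.dotProduct_mulVec_zero_iff _).mp h2
  -- extract entries
  have hx0 : x = 0 := by
    funext ℓ
    have key : ∀ i : Fin L, ∑ m : Fin L, (H₀ ℓ m * x m) * (star (z m)) ^ (i : ℕ) = 0 := by
      intro i
      have := congrFun (hker (i : ℕ) (lt_of_lt_of_le i.2 hK)) ℓ
      rw [Matrix.diagonal_pow, Matrix.diagonal_conjTranspose] at this
      simpa [Matrix.mulVec, dotProduct, Matrix.diagonal_apply, Finset.mul_sum,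
        mul_ite, ite_mul, Finset.sum_ite_eq, Finset.sum_ite_eq',
        Pi.star_apply, Pi.pow_apply, mul_comm, mul_assoc, mul_left_comm] using this
    have hsz : Function.Injective (fun m => star (z m)) :=
      fun a b hab => hz (by simpa using congrArg star hab)
    have := Matrix.eq_zero_of_forall_pow_sum_mul_pow_eq_zero hsz key
    have hℓ := congrFun this ℓ
    simp only [Pi.zero_apply] at hℓ
    rcases mul_eq_zero.mp hℓ with h' | h'
    · exact absurd h' (hdiag ℓ)
    · simp [h']
  exact hx hx0


/-- Conclusion of Proposition 1 applied to the beamformed smoothed covariance: with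
`D = diag z` (`z` pairwise distinct unimodular), `H₀` Hermitian PSD with nonzero diagonal,
`A` of full column rank `L`, and `W` unitary, the matrix
`Wᴴ A ((1/K) Σ_{k<K} Dᵏ H₀ (Dᵏ)ᴴ) Aᴴ W` has rank `L` (for `K ≥ L ≥ 1`). -/
theorem stmt_17 (L K Nr : ℕ) (hL : 1 ≤ L) (hK : L ≤ K)
    (z : Fin L → ℂ) (hz : Function.Injective z) (hz1 : ∀ ℓ, ‖z ℓ‖ = 1)
    (H₀ : Matrix (Fin L) (Fin L) ℂ) (hH₀ : H₀.PosSemidef) (hdiag : ∀ ℓ, H₀ ℓ ℓ ≠ 0)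
    (A : Matrix (Fin Nr) (Fin L) ℂ) (hA : A.rank = L)
    (W : Matrix (Fin Nr) (Fin Nr) ℂ) (hW : W ∈ Matrix.unitaryGroup (Fin Nr) ℂ) :
    (Wᴴ * A * ((1 / (K : ℂ)) • ∑ k ∈ Finset.range K,
      (Matrix.diagonal z ^ k) * H₀ * ((Matrix.diagonal z ^ k)ᴴ)) * Aᴴ * W).rank = L := by
  set T := ∑ k ∈ Finset.range K, (Matrix.diagonal z ^ k) * H₀ * ((Matrix.diagonal z ^ k)ᴴ) with hTdef
  have hT : T.PosDef := aux_posdef L K hL hK z hz H₀ hH₀ hdiag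
  have hKne : (K : ℂ) ≠ 0 := by
    have : K ≠ 0 := by omega
    exact_mod_cast Nat.cast_ne_zero.mpr this
  have hcne : (1 / (K : ℂ)) ≠ 0 := one_div_ne_zero hKne
  -- W invertible
  have hWu : IsUnit W.det := IsUnit.of_mul_eq_one _ (Matrix.det_of_mem_unitary hW).2
  have hWHu : IsUnit Wᴴ.det := by
    rw [Matrix.det_conjTranspose]
    exact hWu.star
  -- pull out scalar
  have hscal : Wᴴ * A * ((1 / (K : ℂ)) • T) * Aᴴ * W
      = ((1 / (K : ℂ)) • (1 : Matrix (Fin Nr) (Fin Nr) ℂ)) * (Wᴴ * A * T * Aᴴ * W) := by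
    rw [Matrix.smul_mul, Matrix.one_mul]
    rw [Matrix.mul_smul, Matrix.smul_mul, Matrix.smul_mul]
  rw [hscal]
  have hsu : IsUnit ((1 / (K : ℂ)) • (1 : Matrix (Fin Nr) (Fin Nr) ℂ)).det := by
    rw [Matrix.det_smul, Matrix.det_one, mul_one]
    exact (IsUnit.pow _ (Ne.isUnit hcne))
  rw [Matrix.rank_mul_eq_right_of_isUnit_det _ _ hsu]
  rw [Matrix.rank_mul_eq_left_of_isUnit_det W _ hWu]
  have hassoc : Wᴴ * A * T * Aᴴ = Wᴴ * (A * T * Aᴴ) := by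
    simp only [Matrix.mul_assoc]
  rw [hassoc, Matrix.rank_mul_eq_right_of_isUnit_det _ _ hWHu]
  -- now rank (A * T * Aᴴ) = L
  obtain ⟨B, hBB, hBH⟩ : ∃ B : Matrix (Fin L) (Fin L) ℂ, B * B = T ∧ Bᴴ = B := by
    open scoped MatrixOrder in
    exact ⟨CFC.sqrt T, CFC.sqrt_mul_sqrt_self T hT.posSemidef.nonneg,
      (CFC.sqrt_nonneg T).posSemidef.isHermitian⟩
  have hBu : IsUnit B.det := by
    have hdet : B.det * B.det = T.det := by rw [← Matrix.det_mul, hBB]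
    have hTd : T.det ≠ 0 := hT.det_pos.ne'
    have : B.det ≠ 0 := fun h => hTd (by rw [← hdet, h, mul_zero])
    exact this.isUnit
  have hfact : A * T * Aᴴ = (B * Aᴴ)ᴴ * (B * Aᴴ) := by
    rw [Matrix.conjTranspose_mul, hBH, Matrix.conjTranspose_conjTranspose]
    rw [← hBB]
    simp only [Matrix.mul_assoc]
  rw [hfact, Matrix.rank_conjTranspose_mul_self,
    Matrix.rank_mul_eq_right_of_isUnit_det _ _ hBu, Matrix.rank_conjTranspose, hA]
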